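/- Let $N_n = N_1^{(n)}(\Lambda_n)$, where for each $n$, $N_1^{(n)}$ is a standard Poisson process and $\Lambda_n$ is a nonnegative random variable independent of $N_1^{(n)}$. Let $(k_n)$ be a sequence of positive reals with $k_n \to \infty$. Then $N_n/k_n$ converges in distribution to a law with distribution function $A$ if and only if $\Lambda_n/k_n$ converges in distribution to the same law $A$. -/

import Mathlib

open MeasureTheory ProbabilityTheory Filter Set
open scoped NNReal ENNReal

noncomputable section

/-- Convergence in distribution, expressed via pointwise convergence of distribution
functions at all continuity points (atoms excluded) of the limit law. -/
def TendstoInDistrib {Ω : Type*} [MeasureSpace Ω] (Y : ℕ → Ω → ℝ) (μ : Measure ℝ) : Prop :=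
  ∀ x : ℝ, μ {x} = 0 →
    Tendsto (fun n => (ℙ {ω | Y n ω < x}).toReal) atTop (nhds (μ (Iio x)).toReal)

lemma pois_base (l : ℝ) :
    Summable (fun j : ℕ => l ^ j / j.factorial) ∧
    (∑' j : ℕ, l ^ j / j.factorial) = Real.exp l := by
  refine ⟨Real.summable_pow_div_factorial l, ?_⟩
  rw [Real.exp_eq_exp_ℝ, NormedSpace.exp_eq_tsum_div]
lemma succ_id (l : ℝ) (j : ℕ) :
    ((j+1 : ℕ) : ℝ) * (l ^ (j+1) / (j+1).factorial) = l * (l ^ j / j.factorial) := by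
  rw [Nat.factorial_succ]
  have h1 : ((j:ℝ) + 1) ≠ 0 := by positivity
  have h2 : ((j.factorial : ℝ)) ≠ 0 := Nat.cast_ne_zero.2 j.factorial_ne_zero
  push_cast; field_simp; ring
lemma pois_mean (l : ℝ) :
    Summable (fun j : ℕ => (j : ℝ) * (l ^ j / j.factorial)) ∧
    (∑' j : ℕ, (j : ℝ) * (l ^ j / j.factorial)) = l * Real.exp l := by
  obtain ⟨hb, hbs⟩ := pois_base l
  have hshift : (fun j : ℕ => ((j+1 : ℕ) : ℝ) * (l ^ (j+1) / (j+1).factorial))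
      = fun j : ℕ => l * (l ^ j / j.factorial) := funext (succ_id l)
  have hs : Summable (fun j : ℕ => (j : ℝ) * (l ^ j / j.factorial)) := by
    apply (summable_nat_add_iff 1).mp
    rw [show (fun j : ℕ => ((j+1 : ℕ) : ℝ) * (l ^ (j+1) / (j+1).factorial)) = _ from hshift]
    exact hb.mul_left l
  refine ⟨hs, ?_⟩
  rw [Summable.tsum_eq_zero_add hs]
  simp only [Nat.cast_zero, zero_mul, zero_add]
  rw [show (fun j : ℕ => ((j+1 : ℕ) : ℝ) * (l ^ (j+1) / (j+1).factorial)) = _ from hshift,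
    tsum_mul_left, hbs]

lemma pois_mean2 (l : ℝ) :
    Summable (fun j : ℕ => (j : ℝ) * ((j : ℝ) - 1) * (l ^ j / j.factorial)) ∧
    (∑' j : ℕ, (j : ℝ) * ((j : ℝ) - 1) * (l ^ j / j.factorial)) = l ^ 2 * Real.exp l := by
  obtain ⟨h1, h1s⟩ := pois_mean l
  have hshift : (fun j : ℕ => ((j+1 : ℕ) : ℝ) * (((j+1 : ℕ) : ℝ) - 1) * (l ^ (j+1) / (j+1).factorial))
      = fun j : ℕ => l * ((j : ℝ) * (l ^ j / j.factorial)) := by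
    funext j
    have := succ_id l j
    push_cast at this ⊢
    nlinarith [this]
  have hs : Summable (fun j : ℕ => (j : ℝ) * ((j : ℝ) - 1) * (l ^ j / j.factorial)) := by
    apply (summable_nat_add_iff 1).mp
    rw [show (fun j : ℕ => ((j+1 : ℕ) : ℝ) * (((j+1 : ℕ) : ℝ) - 1) * (l ^ (j+1) / (j+1).factorial)) = _ from hshift]
    exact h1.mul_left l
  refine ⟨hs, ?_⟩
  rw [Summable.tsum_eq_zero_add hs]
  simp only [Nat.cast_zero, zero_mul, zero_add, zero_sub, mul_zero]
  rw [show (fun j : ℕ => ((j+1 : ℕ) : ℝ) * (((j+1 : ℕ) : ℝ) - 1) * (l ^ (j+1) / (j+1).factorial)) = _ from hshift,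
    tsum_mul_left, h1s]
  ring

lemma pois_var (l : ℝ) :
    Summable (fun j : ℕ => (l - (j : ℝ)) ^ 2 * (l ^ j / j.factorial)) ∧
    (∑' j : ℕ, (l - (j : ℝ)) ^ 2 * (l ^ j / j.factorial)) = l * Real.exp l := by
  obtain ⟨hb, hbs⟩ := pois_base l
  obtain ⟨h1, h1s⟩ := pois_mean l
  obtain ⟨h2, h2s⟩ := pois_mean2 l
  have hveq : (fun j : ℕ => (l - (j : ℝ)) ^ 2 * (l ^ j / j.factorial))
      = fun j : ℕ => (l ^ 2 * (l ^ j / j.factorial) - (2 * l) * ((j : ℝ) * (l ^ j / j.factorial)))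
        + ((j : ℝ) * ((j : ℝ) - 1) * (l ^ j / j.factorial) + (j : ℝ) * (l ^ j / j.factorial)) := by
    funext j; ring
  have hs : Summable (fun j : ℕ => (l - (j : ℝ)) ^ 2 * (l ^ j / j.factorial)) := by
    rw [hveq]; exact ((hb.mul_left (l^2)).sub (h1.mul_left (2*l))).add (h2.add h1)
  refine ⟨hs, ?_⟩
  rw [hveq, Summable.tsum_add ((hb.mul_left (l^2)).sub (h1.mul_left (2*l))) (h2.add h1),
    Summable.tsum_sub (hb.mul_left (l^2)) (h1.mul_left (2*l)), Summable.tsum_add h2 h1,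
    tsum_mul_left, tsum_mul_left, hbs, h1s, h2s]
  ring

/-- partial sum of poisson pmf -/
noncomputable def pfsum (l : ℝ) (M : ℕ) : ℝ := ∑ j ∈ Finset.range M, Real.exp (-l) * l ^ j / j.factorial

lemma pfsum_nonneg {l : ℝ} (hl : 0 ≤ l) (M : ℕ) : 0 ≤ pfsum l M := by
  apply Finset.sum_nonneg; intro j _; positivity

lemma pfsum_eq (l : ℝ) (M : ℕ) :
    pfsum l M = Real.exp (-l) * ∑ j ∈ Finset.range M, l ^ j / j.factorial := by
  rw [Finset.mul_sum]; apply Finset.sum_congr rfl; intro j _; ring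

lemma pfsum_le_one {l : ℝ} (hl : 0 ≤ l) (M : ℕ) : pfsum l M ≤ 1 := by
  obtain ⟨hb, hbs⟩ := pois_base l
  rw [pfsum_eq]
  have h1 : ∑ j ∈ Finset.range M, l ^ j / j.factorial ≤ Real.exp l := by
    rw [← hbs]
    exact Summable.sum_le_tsum _ (fun j _ => by positivity) hb
  calc Real.exp (-l) * ∑ j ∈ Finset.range M, l ^ j / j.factorial
      ≤ Real.exp (-l) * Real.exp l := by
        exact mul_le_mul_of_nonneg_left h1 (Real.exp_nonneg _)
    _ = 1 := by rw [← Real.exp_add]; simp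

lemma cheb_upper {l t : ℝ} {M : ℕ} (ht : 0 < t) (hMl : (M : ℝ) + t ≤ l) :
    pfsum l M ≤ ((M : ℝ) + t) / t ^ 2 := by
  have hl : (0:ℝ) ≤ l := le_trans (by positivity) hMl
  obtain ⟨hv, hvs⟩ := pois_var l
  have hlM : 0 < l - M := by linarith
  have key : pfsum l M * (l - M) ^ 2 ≤ l := by
    rw [pfsum_eq, mul_assoc]
    have h1 : (∑ j ∈ Finset.range M, l ^ j / j.factorial) * (l - M) ^ 2
        ≤ ∑' j : ℕ, (l - (j : ℝ)) ^ 2 * (l ^ j / j.factorial) := by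
      rw [Finset.sum_mul]
      calc ∑ j ∈ Finset.range M, l ^ j / j.factorial * (l - M) ^ 2
          ≤ ∑ j ∈ Finset.range M, (l - (j : ℝ)) ^ 2 * (l ^ j / j.factorial) := by
            apply Finset.sum_le_sum
            intro j hj
            rw [Finset.mem_range] at hj
            have hj' : (j : ℝ) ≤ M := by exact_mod_cast hj.le
            rw [mul_comm ((l - (j:ℝ))^2) _]
            apply mul_le_mul_of_nonneg_left _ (by positivity)
            apply sq_le_sq' <;> nlinarith
        _ ≤ ∑' j : ℕ, (l - (j : ℝ)) ^ 2 * (l ^ j / j.factorial) :=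
            Summable.sum_le_tsum _ (fun j _ => by positivity) hv
    calc Real.exp (-l) * ((∑ j ∈ Finset.range M, l ^ j / j.factorial) * (l - M) ^ 2)
        ≤ Real.exp (-l) * (l * Real.exp l) := by
          rw [← hvs]; exact mul_le_mul_of_nonneg_left h1 (Real.exp_nonneg _)
      _ = l := by rw [show Real.exp (-l) * (l * Real.exp l) = l * (Real.exp (-l) * Real.exp l) by ring,
            ← Real.exp_add]; simp
  have e1 : pfsum l M ≤ l / (l - M) ^ 2 := (le_div_iff₀ (by positivity)).2 key
  have e2 : l / (l - M) ^ 2 ≤ ((M : ℝ) + t) / t ^ 2 := by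
    rw [div_le_div_iff₀ (by positivity) (by positivity)]
    have hM0 : (0:ℝ) ≤ M := Nat.cast_nonneg M
    have key2 : (0:ℝ) ≤ (l - M - t) * ((M:ℝ)*(l - M + t) + (l - M)*t) := by
      apply mul_nonneg (by linarith)
      have : (0:ℝ) ≤ (M:ℝ)*(l - M + t) := mul_nonneg hM0 (by linarith)
      nlinarith
    nlinarith [key2]
  linarith

set_option maxHeartbeats 1000000 in
lemma cheb_lower {l t : ℝ} {M : ℕ} (hl : 0 ≤ l) (ht : 0 < t) (hMl : l + t ≤ (M : ℝ)) :
    1 - l / t ^ 2 ≤ pfsum l M := by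
  obtain ⟨hb, hbs⟩ := pois_base l
  obtain ⟨hv, hvs⟩ := pois_var l
  have hsplit := Summable.sum_add_tsum_nat_add (f := fun j : ℕ => l ^ j / j.factorial) M hb
  have hsplitv := Summable.sum_add_tsum_nat_add (f := fun j : ℕ => (l - (j : ℝ)) ^ 2 * (l ^ j / j.factorial)) M hv
  have htail_sum : Summable (fun i : ℕ => l ^ (i + M) / (i + M).factorial) :=
    (summable_nat_add_iff M).2 hb
  have htailv_sum : Summable (fun i : ℕ => (l - ((i + M : ℕ) : ℝ)) ^ 2 * (l ^ (i + M) / (i + M).factorial)) :=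
    (summable_nat_add_iff M).2 hv
  set T : ℝ := ∑' i : ℕ, l ^ (i + M) / (i + M).factorial with hT
  have hTb : T * t ^ 2 ≤ l * Real.exp l := by
    calc T * t ^ 2 = ∑' i : ℕ, (l ^ (i + M) / (i + M).factorial) * t ^ 2 := by
          rw [hT, tsum_mul_right]
      _ ≤ ∑' i : ℕ, (l - ((i + M : ℕ) : ℝ)) ^ 2 * (l ^ (i + M) / (i + M).factorial) := by
          apply Summable.tsum_le_tsum _ (htail_sum.mul_right _) htailv_sum
          intro i
          have hi : l + t ≤ ((i + M : ℕ) : ℝ) := by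
            push_cast; have : (0:ℝ) ≤ (i:ℝ) := Nat.cast_nonneg i; linarith
          have hb0 : (0:ℝ) ≤ l ^ (i + M) / (i + M).factorial := by positivity
          have hsq : t ^ 2 ≤ (l - ((i + M : ℕ) : ℝ)) ^ 2 := by nlinarith
          calc l ^ (i + M) / (i + M).factorial * t ^ 2
              = t ^ 2 * (l ^ (i + M) / (i + M).factorial) := by ring
            _ ≤ (l - ((i + M : ℕ) : ℝ)) ^ 2 * (l ^ (i + M) / (i + M).factorial) :=
                mul_le_mul_of_nonneg_right hsq hb0
      _ ≤ ∑' j : ℕ, (l - (j : ℝ)) ^ 2 * (l ^ j / j.factorial) := by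
          rw [← hsplitv]
          have : 0 ≤ ∑ i ∈ Finset.range M, (l - (i : ℝ)) ^ 2 * (l ^ i / i.factorial) := by
            apply Finset.sum_nonneg; intro j _; positivity
          linarith
      _ = l * Real.exp l := hvs
  have h1 : 1 - pfsum l M = Real.exp (-l) * T := by
    have : pfsum l M + Real.exp (-l) * T = 1 := by
      rw [pfsum_eq, ← mul_add, hsplit, hbs, ← Real.exp_add]; simp
    linarith
  have hTnn : 0 ≤ T := by
    apply tsum_nonneg; intro i; positivity
  have h2 : Real.exp (-l) * T ≤ l / t ^ 2 := by
    have hTt : T ≤ l * Real.exp l / t ^ 2 := by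
      rw [le_div_iff₀ (by positivity)]; exact hTb
    calc Real.exp (-l) * T ≤ Real.exp (-l) * (l * Real.exp l / t ^ 2) :=
          mul_le_mul_of_nonneg_left hTt (Real.exp_nonneg _)
      _ = l / t ^ 2 * (Real.exp (-l) * Real.exp l) := by ring
      _ = l / t ^ 2 := by rw [← Real.exp_add]; simp
  linarith

section Prob
variable {Ω : Type*} [MeasureSpace Ω] [IsProbabilityMeasure (ℙ : Measure Ω)]
  {Nn : Ω → ℕ} {Λn : Ω → ℝ}

lemma pf_le_one {l : ℝ} (hl : 0 ≤ l) (j : ℕ) :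
    Real.exp (-l) * l ^ j / j.factorial ≤ 1 := by
  obtain ⟨hb, hbs⟩ := pois_base l
  have h1 : l ^ j / j.factorial ≤ Real.exp l := by
    rw [← hbs]; exact Summable.le_tsum hb j (fun i _ => by positivity)
  have := mul_le_mul_of_nonneg_left h1 (Real.exp_nonneg (-l))
  calc Real.exp (-l) * l ^ j / j.factorial = Real.exp (-l) * (l ^ j / j.factorial) := by ring
    _ ≤ Real.exp (-l) * Real.exp l := this
    _ = 1 := by rw [← Real.exp_add]; simp

lemma pf_integrable (hΛ : Measurable Λn) (hΛnn : ∀ ω, 0 ≤ Λn ω) (j : ℕ) :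
    Integrable (fun ω => Real.exp (-(Λn ω)) * Λn ω ^ j / j.factorial) ℙ := by
  have hmeas : Measurable (fun ω => Real.exp (-(Λn ω)) * Λn ω ^ j / j.factorial) :=
    ((hΛ.neg.exp.mul (hΛ.pow_const j)).div_const _)
  apply (integrable_const (1:ℝ)).mono' hmeas.aestronglyMeasurable
  filter_upwards with ω
  rw [Real.norm_eq_abs, abs_of_nonneg (div_nonneg (mul_nonneg (Real.exp_nonneg _)
    (pow_nonneg (hΛnn ω) _)) (Nat.cast_nonneg _))]
  exact pf_le_one (hΛnn ω) j

lemma pfsum_integrable (hΛ : Measurable Λn) (hΛnn : ∀ ω, 0 ≤ Λn ω) (M : ℕ) :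
    Integrable (fun ω => pfsum (Λn ω) M) ℙ := by
  simp only [pfsum]
  exact integrable_finset_sum _ (fun j _ => pf_integrable hΛ hΛnn j)

lemma prob_eq_integral (hN : Measurable Nn) (hΛ : Measurable Λn) (hΛnn : ∀ ω, 0 ≤ Λn ω)
    (hm : ∀ j, (ℙ {ω | Nn ω = j}).toReal = ∫ ω, Real.exp (-(Λn ω)) * Λn ω ^ j / j.factorial)
    (M : ℕ) : (ℙ {ω | Nn ω < M}).toReal = ∫ ω, pfsum (Λn ω) M := by
  induction M with
  | zero =>
    have : {ω | Nn ω < 0} = (∅ : Set Ω) := by ext ω; simp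
    simp [this, pfsum]
  | succ M ih =>
    have hset : {ω | Nn ω < M + 1} = {ω | Nn ω < M} ∪ {ω | Nn ω = M} := by
      ext ω; simp [Nat.lt_succ_iff_lt_or_eq, Nat.le_iff_lt_or_eq]
    have hdisj : Disjoint {ω | Nn ω < M} {ω | Nn ω = M} := by
      rw [Set.disjoint_left]; intro ω h1 h2; simp only [mem_setOf_eq] at h1 h2; omega
    have hms : MeasurableSet {ω | Nn ω = M} := hN (measurableSet_singleton M)
    have hunion : ℙ {ω | Nn ω < M + 1} = ℙ {ω | Nn ω < M} + ℙ {ω | Nn ω = M} := by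
      rw [hset, measure_union hdisj hms]
    rw [hunion, ENNReal.toReal_add (measure_ne_top _ _) (measure_ne_top _ _), ih, hm M]
    have : (fun ω => pfsum (Λn ω) (M + 1))
        = fun ω => pfsum (Λn ω) M + Real.exp (-(Λn ω)) * Λn ω ^ M / M.factorial := by
      funext ω; simp [pfsum, Finset.sum_range_succ]
    rw [this, integral_add (pfsum_integrable hΛ hΛnn M) (pf_integrable hΛ hΛnn M)]

lemma mixed_upper (hN : Measurable Nn) (hΛ : Measurable Λn) (hΛnn : ∀ ω, 0 ≤ Λn ω)
    (hm : ∀ j, (ℙ {ω | Nn ω = j}).toReal = ∫ ω, Real.exp (-(Λn ω)) * Λn ω ^ j / j.factorial)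
    (M : ℕ) {t : ℝ} (ht : 0 < t) :
    (ℙ {ω | Nn ω < M}).toReal ≤ (ℙ {ω | Λn ω < (M:ℝ) + t}).toReal + ((M:ℝ) + t) / t ^ 2 := by
  rw [prob_eq_integral hN hΛ hΛnn hm M]
  have hS : MeasurableSet {ω | Λn ω < (M:ℝ) + t} := hΛ measurableSet_Iio
  have hpt : ∀ ω, pfsum (Λn ω) M ≤
      Set.indicator {ω | Λn ω < (M:ℝ) + t} (fun _ => (1:ℝ)) ω + ((M:ℝ) + t) / t ^ 2 := by
    intro ω
    by_cases h : Λn ω < (M:ℝ) + t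
    · rw [Set.indicator_of_mem (show ω ∈ {ω' | Λn ω' < (M:ℝ) + t} from h)]
      have := pfsum_le_one (hΛnn ω) M
      have hc : (0:ℝ) ≤ ((M:ℝ) + t) / t ^ 2 := by positivity
      linarith
    · rw [Set.indicator_of_notMem (show ω ∉ {ω' | Λn ω' < (M:ℝ) + t} from h)]
      push_neg at h
      have := cheb_upper ht h
      linarith
  have hint : Integrable (fun ω => Set.indicator {ω | Λn ω < (M:ℝ) + t} (fun _ => (1:ℝ)) ω
      + ((M:ℝ) + t) / t ^ 2) ℙ :=
    ((integrable_const (1:ℝ)).indicator hS).add (integrable_const _)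
  calc ∫ ω, pfsum (Λn ω) M
      ≤ ∫ ω, (Set.indicator {ω | Λn ω < (M:ℝ) + t} (fun _ => (1:ℝ)) ω + ((M:ℝ) + t) / t ^ 2) :=
        integral_mono (pfsum_integrable hΛ hΛnn M) hint hpt
    _ = (ℙ {ω | Λn ω < (M:ℝ) + t}).toReal + ((M:ℝ) + t) / t ^ 2 := by
        rw [integral_add ((integrable_const (1:ℝ)).indicator hS) (integrable_const _),
          integral_indicator_const (1:ℝ) hS, integral_const]
        simp
        rfl

lemma mixed_lower (hN : Measurable Nn) (hΛ : Measurable Λn) (hΛnn : ∀ ω, 0 ≤ Λn ω)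
    (hm : ∀ j, (ℙ {ω | Nn ω = j}).toReal = ∫ ω, Real.exp (-(Λn ω)) * Λn ω ^ j / j.factorial)
    (M : ℕ) {t : ℝ} (ht : 0 < t) :
    (ℙ {ω | Λn ω ≤ (M:ℝ) - t}).toReal - (M:ℝ) / t ^ 2 ≤ (ℙ {ω | Nn ω < M}).toReal := by
  rw [prob_eq_integral hN hΛ hΛnn hm M]
  have hS : MeasurableSet {ω | Λn ω ≤ (M:ℝ) - t} := hΛ measurableSet_Iic
  have hpt : ∀ ω, Set.indicator {ω | Λn ω ≤ (M:ℝ) - t} (fun _ => (1:ℝ)) ω - (M:ℝ) / t ^ 2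
      ≤ pfsum (Λn ω) M := by
    intro ω
    by_cases h : Λn ω ≤ (M:ℝ) - t
    · rw [Set.indicator_of_mem (show ω ∈ {ω' | Λn ω' ≤ (M:ℝ) - t} from h)]
      have h1 : 1 - Λn ω / t ^ 2 ≤ pfsum (Λn ω) M := cheb_lower (hΛnn ω) ht (by linarith)
      have h2 : Λn ω / t ^ 2 ≤ (M:ℝ) / t ^ 2 := by
        apply div_le_div_of_nonneg_right ?_ (by positivity)
        · linarith
      linarith
    · rw [Set.indicator_of_notMem (show ω ∉ {ω' | Λn ω' ≤ (M:ℝ) - t} from h)]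
      have := pfsum_nonneg (hΛnn ω) M
      have hc : (0:ℝ) ≤ (M:ℝ) / t ^ 2 := by positivity
      linarith
  have hint : Integrable (fun ω => Set.indicator {ω | Λn ω ≤ (M:ℝ) - t} (fun _ => (1:ℝ)) ω
      - (M:ℝ) / t ^ 2) ℙ :=
    ((integrable_const (1:ℝ)).indicator hS).sub (integrable_const _)
  calc (ℙ {ω | Λn ω ≤ (M:ℝ) - t}).toReal - (M:ℝ) / t ^ 2
      = ∫ ω, (Set.indicator {ω | Λn ω ≤ (M:ℝ) - t} (fun _ => (1:ℝ)) ω - (M:ℝ) / t ^ 2) := by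
        rw [integral_sub ((integrable_const (1:ℝ)).indicator hS) (integrable_const _),
          integral_indicator_const (1:ℝ) hS, integral_const]
        simp
        rfl
    _ ≤ ∫ ω, pfsum (Λn ω) M := integral_mono hint (pfsum_integrable hΛ hΛnn M) hpt

end Prob

lemma squeeze_tendsto (f : ℕ → ℝ) (L : ℝ)
    (h : ∀ η : ℝ, 0 < η → (∀ᶠ n in atTop, f n ≤ L + η) ∧ (∀ᶠ n in atTop, L - η ≤ f n)) :
    Tendsto f atTop (nhds L) := by
  rw [Metric.tendsto_nhds]
  intro ε hε
  obtain ⟨h1, h2⟩ := h (ε/2) (by linarith)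
  filter_upwards [h1, h2] with n hn1 hn2
  rw [Real.dist_eq, abs_lt]
  constructor <;> linarith

lemma exists_nonatom (A : Measure ℝ) [IsFiniteMeasure A] {a b : ℝ} (hab : a < b) :
    ∃ y, y ∈ Ioo a b ∧ A {y} = 0 := by
  have hc : Set.Countable {t : ℝ | 0 < A {t}} := by
    have := MeasureTheory.Measure.countable_meas_level_set_pos (μ := A) (g := (id : ℝ → ℝ))
      measurable_id
    simpa using this
  by_contra hcon
  push_neg at hcon
  have hsub : Ioo a b ⊆ {t : ℝ | 0 < A {t}} := by
    intro y hy
    exact pos_iff_ne_zero.2 (hcon y hy)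
  have : (Ioo a b).Countable := hc.mono hsub
  rw [← Cardinal.le_aleph0_iff_set_countable, Cardinal.mk_Ioo_real hab] at this
  exact (not_le.mpr Cardinal.aleph0_lt_continuum) this

lemma approx_above (A : Measure ℝ) [IsProbabilityMeasure A] {x η : ℝ} (hx : A {x} = 0)
    (hη : 0 < η) :
    ∃ y, x < y ∧ A {y} = 0 ∧ (A (Iio y)).toReal ≤ (A (Iio x)).toReal + η := by
  have hiInter : (⋂ n : ℕ, Ico x (x + 1/(n+1))) = {x} := by
    ext y
    simp only [mem_iInter, mem_Ico, mem_singleton_iff]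
    constructor
    · intro h
      have hxy : x ≤ y := (h 0).1
      by_contra hne
      have hlt : 0 < y - x := by
        rcases lt_or_eq_of_le hxy with h' | h'
        · linarith
        · exact absurd h'.symm hne
      obtain ⟨n, hn⟩ := exists_nat_one_div_lt hlt
      have := (h n).2
      linarith
    · rintro rfl n
      refine ⟨le_refl _, ?_⟩
      have : (0:ℝ) < 1/(n+1) := by positivity
      linarith
  have hanti : Antitone (fun n : ℕ => Ico x (x + 1/(n+1))) := by
    intro n m hnm
    apply Ico_subset_Ico_right
    have h1 : (n:ℝ) + 1 ≤ (m:ℝ) + 1 := by exact_mod_cast Nat.succ_le_succ hnm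
    have h2 : (0:ℝ) < (n:ℝ)+1 := by positivity
    have := one_div_le_one_div_of_le h2 h1
    linarith
  have htend : Tendsto (fun n : ℕ => A (Ico x (x + 1/(n+1)))) atTop (nhds 0) := by
    have := tendsto_measure_iInter_atTop (μ := A) (s := fun n : ℕ => Ico x (x + 1/(n+1)))
      (fun n => measurableSet_Ico.nullMeasurableSet) hanti ⟨0, measure_ne_top _ _⟩
    rw [hiInter, hx] at this
    exact this
  have hev : ∀ᶠ n : ℕ in atTop, A (Ico x (x + 1/(n+1))) < ENNReal.ofReal η := by
    apply htend.eventually_lt_const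
    simp [ENNReal.ofReal_pos, hη]
  obtain ⟨n, hn⟩ := hev.exists
  obtain ⟨y, hy, hay⟩ := exists_nonatom A (show x < x + 1/((n:ℝ)+1) by
    have : (0:ℝ) < 1/((n:ℝ)+1) := by positivity
    linarith)
  refine ⟨y, hy.1, hay, ?_⟩
  have hsub : Iio y ⊆ Iio x ∪ Ico x (x + 1/(n+1)) := by
    intro z hz
    rcases lt_or_ge z x with h | h
    · exact Or.inl h
    · exact Or.inr ⟨h, lt_trans hz hy.2⟩
  have h1 : A (Iio y) ≤ A (Iio x) + ENNReal.ofReal η :=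
    le_trans (measure_mono hsub) (le_trans (measure_union_le _ _)
      (add_le_add le_rfl hn.le))
  have h2 := ENNReal.toReal_mono
    (ENNReal.add_ne_top.2 ⟨measure_ne_top _ _, ENNReal.ofReal_ne_top⟩) h1
  rwa [ENNReal.toReal_add (measure_ne_top _ _) ENNReal.ofReal_ne_top,
    ENNReal.toReal_ofReal hη.le] at h2

lemma approx_below (A : Measure ℝ) [IsProbabilityMeasure A] {x η : ℝ} (hη : 0 < η) :
    ∃ y, y < x ∧ A {y} = 0 ∧ (A (Iio x)).toReal ≤ (A (Iio y)).toReal + η := by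
  have hiInter : (⋂ n : ℕ, Ico (x - 1/(n+1)) x) = ∅ := by
    ext y
    simp only [mem_iInter, mem_Ico, mem_empty_iff_false, iff_false]
    intro h
    have hxy : y < x := (h 0).2
    have hlt : 0 < x - y := by linarith
    obtain ⟨n, hn⟩ := exists_nat_one_div_lt hlt
    have := (h n).1
    linarith
  have hanti : Antitone (fun n : ℕ => Ico (x - 1/(n+1)) x) := by
    intro n m hnm
    apply Ico_subset_Ico_left
    have h1 : (n:ℝ) + 1 ≤ (m:ℝ) + 1 := by exact_mod_cast Nat.succ_le_succ hnm
    have h2 : (0:ℝ) < (n:ℝ)+1 := by positivity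
    have := one_div_le_one_div_of_le h2 h1
    linarith
  have htend : Tendsto (fun n : ℕ => A (Ico (x - 1/(n+1)) x)) atTop (nhds 0) := by
    have := tendsto_measure_iInter_atTop (μ := A) (s := fun n : ℕ => Ico (x - 1/(n+1)) x)
      (fun n => measurableSet_Ico.nullMeasurableSet) hanti ⟨0, measure_ne_top _ _⟩
    rw [hiInter] at this
    simpa [Function.comp_def] using this
  have hev : ∀ᶠ n : ℕ in atTop, A (Ico (x - 1/(n+1)) x) < ENNReal.ofReal η := by
    apply htend.eventually_lt_const
    simp [ENNReal.ofReal_pos, hη]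
  obtain ⟨n, hn⟩ := hev.exists
  obtain ⟨y, hy, hay⟩ := exists_nonatom A (show x - 1/(n+1) < x by
    have : (0:ℝ) < 1/(n+1) := by positivity
    linarith)
  refine ⟨y, hy.2, hay, ?_⟩
  have hsub : Iio x ⊆ Iio y ∪ Ico (x - 1/(n+1)) x := by
    intro z hz
    rcases lt_or_ge z y with h | h
    · exact Or.inl h
    · exact Or.inr ⟨le_trans hy.1.le h, hz⟩
  have h1 : A (Iio x) ≤ A (Iio y) + ENNReal.ofReal η :=
    le_trans (measure_mono hsub) (le_trans (measure_union_le _ _)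
      (add_le_add le_rfl hn.le))
  have h2 := ENNReal.toReal_mono
    (ENNReal.add_ne_top.2 ⟨measure_ne_top _ _, ENNReal.ofReal_ne_top⟩) h1
  rwa [ENNReal.toReal_add (measure_ne_top _ _) ENNReal.ofReal_ne_top,
    ENNReal.toReal_ofReal hη.le] at h2

/-- for mixed Poisson random variables `N_n` directed by `Λ_n` and any
sequence `k_n → ∞` of positive reals, `N_n/k_n` converges in distribution to a law `A`
if and only if `Λ_n/k_n` converges in distribution to `A`. -/
theorem stmt8 {Ω : Type*} [MeasureSpace Ω] [IsProbabilityMeasure (ℙ : Measure Ω)]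
    (N : ℕ → Ω → ℕ) (Λ : ℕ → Ω → ℝ) (k : ℕ → ℝ)
    (hNmeas : ∀ n, Measurable (N n)) (hΛmeas : ∀ n, Measurable (Λ n))
    (hk : ∀ n, 0 < k n) (hkinf : Tendsto k atTop atTop)
    (hΛnn : ∀ n ω, 0 ≤ Λ n ω)
    (hmixed : ∀ (n : ℕ) (j : ℕ), (ℙ {ω | N n ω = j}).toReal
      = ∫ ω, Real.exp (-(Λ n ω)) * Λ n ω ^ j / (Nat.factorial j))
    (A : Measure ℝ) [IsProbabilityMeasure A] :
    TendstoInDistrib (fun n ω => (N n ω : ℝ) / k n) A ↔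
    TendstoInDistrib (fun n ω => Λ n ω / k n) A := by
  have hPNset : ∀ (n : ℕ) (y : ℝ),
      {ω : Ω | (N n ω : ℝ) / k n < y} = {ω : Ω | N n ω < ⌈y * k n⌉₊} := by
    intro n y; ext ω; simp only [Set.mem_setOf_eq]
    rw [div_lt_iff₀ (hk n)]
    exact Nat.lt_ceil.symm
  have hPΛset : ∀ (n : ℕ) (y : ℝ),
      {ω : Ω | Λ n ω / k n < y} = {ω : Ω | Λ n ω < y * k n} := by
    intro n y; ext ω; simp only [Set.mem_setOf_eq]
    exact div_lt_iff₀ (hk n)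
  have hup : ∀ (n M : ℕ) (t : ℝ), 0 < t → (ℙ {ω | N n ω < M}).toReal
      ≤ (ℙ {ω | Λ n ω < (M:ℝ) + t}).toReal + ((M:ℝ) + t) / t ^ 2 :=
    fun n M t ht => mixed_upper (hNmeas n) (hΛmeas n) (hΛnn n) (hmixed n) M ht
  have hlow : ∀ (n M : ℕ) (t : ℝ), 0 < t → (ℙ {ω | Λ n ω ≤ (M:ℝ) - t}).toReal - (M:ℝ) / t ^ 2
      ≤ (ℙ {ω | N n ω < M}).toReal :=
    fun n M t ht => mixed_lower (hNmeas n) (hΛmeas n) (hΛnn n) (hmixed n) M ht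
  have herr : ∀ c ε η' : ℝ, 0 ≤ c → 0 < ε → 0 < η' →
      ∀ᶠ n in atTop, (c * k n + 1 + ε * k n) / (ε * k n) ^ 2 ≤ η' := by
    intro c ε η' hc hε hη'
    filter_upwards [hkinf.eventually_ge_atTop (1 : ℝ),
      hkinf.eventually_ge_atTop ((c + ε + 1) / (η' * ε ^ 2))] with n h1 h2
    have hkn : (0:ℝ) < k n := hk n
    rw [div_le_iff₀ (by positivity)]
    have h3 : c + ε + 1 ≤ η' * ε ^ 2 * k n := by
      rw [div_le_iff₀ (by positivity)] at h2
      linarith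
    have h4 := mul_le_mul_of_nonneg_right h3 hkn.le
    nlinarith [h4, h1, hkn]
  have hzero : ∀ (Y : ℕ → Ω → ℝ), (∀ n ω, 0 ≤ Y n ω) → ∀ x : ℝ, x ≤ 0 →
      ∀ n, {ω | Y n ω < x} = (∅ : Set Ω) := by
    intro Y hY x hx0 n; ext ω
    simp only [Set.mem_setOf_eq, Set.mem_empty_iff_false, iff_false, not_lt]
    exact le_trans hx0 (hY n ω)
  constructor
  · -- N converges → Λ converges
    intro hN' x hx
    show Tendsto (fun n => (ℙ {ω | Λ n ω / k n < x}).toReal) atTop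
      (nhds ((A (Set.Iio x)).toReal))
    rcases le_or_gt x 0 with hx0 | hx0
    · have h1 : Tendsto (fun n => (ℙ {ω | (N n ω : ℝ) / k n < x}).toReal) atTop
          (nhds ((A (Set.Iio x)).toReal)) := hN' x hx
      have heq : (fun n : ℕ => (ℙ {ω | (N n ω : ℝ) / k n < x}).toReal) = fun _ => (0:ℝ) := by
        funext n
        rw [hzero (fun n ω => (N n ω : ℝ) / k n)
          (fun n ω => div_nonneg (Nat.cast_nonneg _) (hk n).le) x hx0 n]
        simp
      rw [heq] at h1
      have hA0 : (A (Set.Iio x)).toReal = 0 := tendsto_nhds_unique h1 tendsto_const_nhds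
      have heq2 : (fun n : ℕ => (ℙ {ω | Λ n ω / k n < x}).toReal) = fun _ => (0:ℝ) := by
        funext n
        rw [hzero (fun n ω => Λ n ω / k n)
          (fun n ω => div_nonneg (hΛnn n ω) (hk n).le) x hx0 n]
        simp
      rw [heq2, hA0]
      exact tendsto_const_nhds
    · apply squeeze_tendsto
      intro η hη
      have hη3 : 0 < η / 3 := by linarith
      constructor
      · -- upper bound
        obtain ⟨y, hxy, hay, hAy⟩ := approx_above A hx hη3
        have hy0 : 0 < y := lt_trans hx0 hxy
        have hε0 : 0 < (y - x) / 2 := by linarith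
        set ε := (y - x) / 2 with hεdef
        have hg : Tendsto (fun n => (ℙ {ω | (N n ω : ℝ) / k n < y}).toReal) atTop
            (nhds ((A (Set.Iio y)).toReal)) := hN' y hay
        have hgev := hg.eventually_le_const (show (A (Set.Iio y)).toReal
          < (A (Set.Iio y)).toReal + η/3 by linarith)
        filter_upwards [hgev, herr y ε (η/3) hy0.le hε0 hη3] with n h1 h2
        have hkn := hk n
        have htn : 0 < ε * k n := by positivity
        have hlb := hlow n ⌈y * k n⌉₊ (ε * k n) htn
        have hMge : y * k n ≤ (⌈y * k n⌉₊ : ℝ) := Nat.le_ceil _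
        have hMle : ((⌈y * k n⌉₊ : ℕ) : ℝ) ≤ y * k n + 1 :=
          (Nat.ceil_lt_add_one (by positivity)).le
        have hxM : x * k n ≤ ((⌈y * k n⌉₊ : ℕ) : ℝ) - ε * k n := by
          have hyk : y * k n = x * k n + 2 * (ε * k n) := by rw [hεdef]; ring
          linarith
        have hmono : (ℙ {ω | Λ n ω < x * k n}).toReal
            ≤ (ℙ {ω | Λ n ω ≤ ((⌈y * k n⌉₊ : ℕ) : ℝ) - ε * k n}).toReal := by
          refine ENNReal.toReal_mono (measure_ne_top _ _) (measure_mono ?_)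
          intro ω hω
          exact le_trans (le_of_lt hω) hxM
        have herrb : ((⌈y * k n⌉₊ : ℕ) : ℝ) / (ε * k n) ^ 2 ≤ η / 3 := by
          refine le_trans ?_ h2
          gcongr
          linarith
        rw [hPNset n y] at h1
        rw [hPΛset n x]
        linarith [hlb, hmono, herrb, h1, hAy]
      · -- lower bound
        obtain ⟨y, hxy, hay, hAy⟩ := approx_below A (x := x) hη3
        have hg : Tendsto (fun n => (ℙ {ω | (N n ω : ℝ) / k n < y}).toReal) atTop
            (nhds ((A (Set.Iio y)).toReal)) := hN' y hay
        rcases le_or_gt y 0 with hy0 | hy0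
        · have heq : (fun n : ℕ => (ℙ {ω | (N n ω : ℝ) / k n < y}).toReal) = fun _ => (0:ℝ) := by
            funext n
            rw [hzero (fun n ω => (N n ω : ℝ) / k n)
              (fun n ω => div_nonneg (Nat.cast_nonneg _) (hk n).le) y hy0 n]
            simp
          rw [heq] at hg
          have hA0 : (A (Set.Iio y)).toReal = 0 := tendsto_nhds_unique hg tendsto_const_nhds
          rw [hA0] at hAy
          filter_upwards with n
          have h0 : (0:ℝ) ≤ (ℙ {ω | Λ n ω / k n < x}).toReal := ENNReal.toReal_nonneg
          linarith
        · have hε0 : 0 < (x - y) / 2 := by linarith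
          set ε := (x - y) / 2 with hεdef
          have hgev := hg.eventually_const_le (show (A (Set.Iio y)).toReal - η/3
            < (A (Set.Iio y)).toReal by linarith)
          filter_upwards [hgev, herr y ε (η/3) hy0.le hε0 hη3,
            hkinf.eventually_ge_atTop (1/ε)] with n h1 h2 h3
          have hkn := hk n
          have htn : 0 < ε * k n := by positivity
          have hub := hup n ⌈y * k n⌉₊ (ε * k n) htn
          have hMle : ((⌈y * k n⌉₊ : ℕ) : ℝ) ≤ y * k n + 1 :=
            (Nat.ceil_lt_add_one (by positivity)).le
          have h1εk : 1 ≤ ε * k n := by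
            rw [div_le_iff₀ hε0] at h3
            nlinarith
          have hMt : ((⌈y * k n⌉₊ : ℕ) : ℝ) + ε * k n ≤ x * k n := by
            have hxk : x * k n = y * k n + 2 * (ε * k n) := by rw [hεdef]; ring
            linarith
          have hmono : (ℙ {ω | Λ n ω < ((⌈y * k n⌉₊ : ℕ) : ℝ) + ε * k n}).toReal
              ≤ (ℙ {ω | Λ n ω < x * k n}).toReal := by
            refine ENNReal.toReal_mono (measure_ne_top _ _) (measure_mono ?_)
            intro ω hω
            exact lt_of_lt_of_le hω hMt
          have herrb : (((⌈y * k n⌉₊ : ℕ) : ℝ) + ε * k n) / (ε * k n) ^ 2 ≤ η / 3 := by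
            refine le_trans ?_ h2
            gcongr
          rw [hPNset n y] at h1
          rw [hPΛset n x]
          linarith [hub, hmono, herrb, h1, hAy]
  · -- Λ converges → N converges
    intro hΛ' x hx
    show Tendsto (fun n => (ℙ {ω | (N n ω : ℝ) / k n < x}).toReal) atTop
      (nhds ((A (Set.Iio x)).toReal))
    rcases le_or_gt x 0 with hx0 | hx0
    · have h1 : Tendsto (fun n => (ℙ {ω | Λ n ω / k n < x}).toReal) atTop
          (nhds ((A (Set.Iio x)).toReal)) := hΛ' x hx
      have heq : (fun n : ℕ => (ℙ {ω | Λ n ω / k n < x}).toReal) = fun _ => (0:ℝ) := by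
        funext n
        rw [hzero (fun n ω => Λ n ω / k n)
          (fun n ω => div_nonneg (hΛnn n ω) (hk n).le) x hx0 n]
        simp
      rw [heq] at h1
      have hA0 : (A (Set.Iio x)).toReal = 0 := tendsto_nhds_unique h1 tendsto_const_nhds
      have heq2 : (fun n : ℕ => (ℙ {ω | (N n ω : ℝ) / k n < x}).toReal) = fun _ => (0:ℝ) := by
        funext n
        rw [hzero (fun n ω => (N n ω : ℝ) / k n)
          (fun n ω => div_nonneg (Nat.cast_nonneg _) (hk n).le) x hx0 n]
        simp
      rw [heq2, hA0]
      exact tendsto_const_nhds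
    · apply squeeze_tendsto
      intro η hη
      have hη3 : 0 < η / 3 := by linarith
      constructor
      · -- upper
        obtain ⟨y, hxy, hay, hAy⟩ := approx_above A hx hη3
        have hε0 : 0 < (y - x) / 2 := by linarith
        set ε := (y - x) / 2 with hεdef
        have hg : Tendsto (fun n => (ℙ {ω | Λ n ω / k n < y}).toReal) atTop
            (nhds ((A (Set.Iio y)).toReal)) := hΛ' y hay
        have hgev := hg.eventually_le_const (show (A (Set.Iio y)).toReal
          < (A (Set.Iio y)).toReal + η/3 by linarith)
        filter_upwards [hgev, herr x ε (η/3) hx0.le hε0 hη3,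
          hkinf.eventually_ge_atTop (1/ε)] with n h1 h2 h3
        have hkn := hk n
        have htn : 0 < ε * k n := by positivity
        have hub := hup n ⌈x * k n⌉₊ (ε * k n) htn
        have hMle : ((⌈x * k n⌉₊ : ℕ) : ℝ) ≤ x * k n + 1 :=
          (Nat.ceil_lt_add_one (by positivity)).le
        have h1εk : 1 ≤ ε * k n := by
          rw [div_le_iff₀ hε0] at h3
          nlinarith
        have hMt : ((⌈x * k n⌉₊ : ℕ) : ℝ) + ε * k n ≤ y * k n := by
          have hyk : y * k n = x * k n + 2 * (ε * k n) := by rw [hεdef]; ring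
          linarith
        have hmono : (ℙ {ω | Λ n ω < ((⌈x * k n⌉₊ : ℕ) : ℝ) + ε * k n}).toReal
            ≤ (ℙ {ω | Λ n ω / k n < y}).toReal := by
          rw [hPΛset n y]
          refine ENNReal.toReal_mono (measure_ne_top _ _) (measure_mono ?_)
          intro ω hω
          exact lt_of_lt_of_le hω hMt
        have herrb : (((⌈x * k n⌉₊ : ℕ) : ℝ) + ε * k n) / (ε * k n) ^ 2 ≤ η / 3 := by
          refine le_trans ?_ h2
          gcongr
        rw [hPNset n x]
        linarith [hub, hmono, herrb, h1, hAy]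
      · -- lower
        obtain ⟨y, hxy, hay, hAy⟩ := approx_below A (x := x) hη3
        have hε0 : 0 < (x - y) / 2 := by linarith
        set ε := (x - y) / 2 with hεdef
        have hg : Tendsto (fun n => (ℙ {ω | Λ n ω / k n < y}).toReal) atTop
            (nhds ((A (Set.Iio y)).toReal)) := hΛ' y hay
        have hgev := hg.eventually_const_le (show (A (Set.Iio y)).toReal - η/3
          < (A (Set.Iio y)).toReal by linarith)
        filter_upwards [hgev, herr x ε (η/3) hx0.le hε0 hη3] with n h1 h2
        have hkn := hk n
        have htn : 0 < ε * k n := by positivity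
        have hlb := hlow n ⌈x * k n⌉₊ (ε * k n) htn
        have hMge : x * k n ≤ (⌈x * k n⌉₊ : ℝ) := Nat.le_ceil _
        have hMle : ((⌈x * k n⌉₊ : ℕ) : ℝ) ≤ x * k n + 1 :=
          (Nat.ceil_lt_add_one (by positivity)).le
        have hyM : y * k n ≤ ((⌈x * k n⌉₊ : ℕ) : ℝ) - ε * k n := by
          have hxk : x * k n = y * k n + 2 * (ε * k n) := by rw [hεdef]; ring
          linarith
        have hmono : (ℙ {ω | Λ n ω / k n < y}).toReal
            ≤ (ℙ {ω | Λ n ω ≤ ((⌈x * k n⌉₊ : ℕ) : ℝ) - ε * k n}).toReal := by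
          rw [hPΛset n y]
          refine ENNReal.toReal_mono (measure_ne_top _ _) (measure_mono ?_)
          intro ω hω
          exact le_trans (le_of_lt hω) hyM
        have herrb : ((⌈x * k n⌉₊ : ℕ) : ℝ) / (ε * k n) ^ 2 ≤ η / 3 := by
          refine le_trans ?_ h2
          gcongr
          linarith
        rw [hPNset n x]
        linarith [hlb, hmono, herrb, h1, hAy]

end
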